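/- Assume 1 ≤ minsupp ≤ |𝒯|. The representation RMinMF := MFCR ∪ MMCRMin exactly characterizes membership in MCR: for every pattern X ⊆ ℐ, X ∈ MCR if and only if there exist J ∈ RMinMF and Z ∈ RMinMF with J ⊆ X ⊆ Z. -/

import Mathlib

open Finset

variable {τ ι : Type*} [DecidableEq ι]

/-- Conjunctive support: number of transactions containing the whole pattern. -/
def suppConj (T : Finset τ) (items : τ → Finset ι) (X : Finset ι) : ℕ :=
  (T.filter fun t => X ⊆ items t).card

/-- Disjunctive support: number of transactions containing at least one item of the pattern. -/
def suppDisj (T : Finset τ) (items : τ → Finset ι) (X : Finset ι) : ℕ :=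
  (T.filter fun t => (X ∩ items t).Nonempty).card

/-- The bond measure (division by zero in `ℚ` yields `0`, matching the convention). -/
def bond (T : Finset τ) (items : τ → Finset ι) (X : Finset ι) : ℚ :=
  (suppConj T items X : ℚ) / (suppDisj T items X : ℚ)

/-- Rare patterns. -/
def MR (T : Finset τ) (items : τ → Finset ι) (I : Finset ι) (minsupp : ℕ) :
    Set (Finset ι) :=
  {X | X ⊆ I ∧ suppConj T items X < minsupp}

/-- Correlated rare patterns. -/
def MCR (T : Finset τ) (items : τ → Finset ι) (I : Finset ι) (minsupp : ℕ) (minbond : ℚ) :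
    Set (Finset ι) :=
  {X | X ⊆ I ∧ minbond ≤ bond T items X ∧ suppConj T items X < minsupp}

/-- Closed correlated rare patterns. -/
def MFCR (T : Finset τ) (items : τ → Finset ι) (I : Finset ι) (minsupp : ℕ) (minbond : ℚ) :
    Set (Finset ι) :=
  {X | X ∈ MCR T items I minsupp minbond ∧
    ∀ Y : Finset ι, X ⊂ Y → Y ⊆ I → bond T items Y ≠ bond T items X}

/-- Minimal correlated rare patterns. -/
def MMCR (T : Finset τ) (items : τ → Finset ι) (I : Finset ι) (minsupp : ℕ) (minbond : ℚ) :
    Set (Finset ι) :=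
  {X | X ∈ MCR T items I minsupp minbond ∧
    ∀ Y : Finset ι, Y ⊂ X → bond T items Y ≠ bond T items X}

/-- Minimal rare patterns: rare patterns no strict subset of which is rare. -/
def MRMin (T : Finset τ) (items : τ → Finset ι) (I : Finset ι) (minsupp : ℕ) :
    Set (Finset ι) :=
  {X | X ∈ MR T items I minsupp ∧ ∀ Y : Finset ι, Y ⊂ X → Y ∉ MR T items I minsupp}

/-- The minimal elements of `MMCR`. -/
def MMCRMin (T : Finset τ) (items : τ → Finset ι) (I : Finset ι) (minsupp : ℕ) (minbond : ℚ) :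
    Set (Finset ι) :=
  MMCR T items I minsupp minbond ∩ MRMin T items I minsupp

/-- The representation `RMinMF = MFCR ∪ MMCRMin`. -/
def RMinMF (T : Finset τ) (items : τ → Finset ι) (I : Finset ι) (minsupp : ℕ) (minbond : ℚ) :
    Set (Finset ι) :=
  MFCR T items I minsupp minbond ∪ MMCRMin T items I minsupp minbond


lemma suppConj_anti (T : Finset τ) (items : τ → Finset ι) {X Y : Finset ι} (h : X ⊆ Y) :
    suppConj T items Y ≤ suppConj T items X := by
  apply Finset.card_le_card
  intro t ht
  simp only [Finset.mem_filter] at *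
  exact ⟨ht.1, h.trans ht.2⟩

lemma suppDisj_mono (T : Finset τ) (items : τ → Finset ι) {X Y : Finset ι} (h : X ⊆ Y) :
    suppDisj T items X ≤ suppDisj T items Y := by
  apply Finset.card_le_card
  intro t ht
  simp only [Finset.mem_filter] at *
  obtain ⟨i, hi⟩ := ht.2
  rw [Finset.mem_inter] at hi
  exact ⟨ht.1, ⟨i, Finset.mem_inter.2 ⟨h hi.1, hi.2⟩⟩⟩

lemma bond_pos_conj {T : Finset τ} {items : τ → Finset ι} {X : Finset ι}
    (hb : 0 < bond T items X) : 0 < suppConj T items X := by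
  rcases Nat.eq_zero_or_pos (suppConj T items X) with h | h
  · rw [bond, h] at hb; simp at hb
  · exact h

lemma bond_pos_disj {T : Finset τ} {items : τ → Finset ι} {X : Finset ι}
    (hb : 0 < bond T items X) : 0 < suppDisj T items X := by
  rcases Nat.eq_zero_or_pos (suppDisj T items X) with h | h
  · rw [bond, h] at hb; simp at hb
  · exact h

lemma bond_empty (T : Finset τ) (items : τ → Finset ι) :
    bond T items (∅ : Finset ι) = 0 := by
  simp [bond, suppDisj]

lemma suppDisj_pos {T : Finset τ} {items : τ → Finset ι} {X Y : Finset ι}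
    (hYX : Y ⊆ X) (hY : Y.Nonempty) (hc : 0 < suppConj T items X) :
    0 < suppDisj T items Y := by
  rw [suppConj, Finset.card_pos] at hc
  obtain ⟨t, ht⟩ := hc
  rw [Finset.mem_filter] at ht
  rw [suppDisj, Finset.card_pos]
  obtain ⟨i, hi⟩ := hY
  exact ⟨t, Finset.mem_filter.2 ⟨ht.1, ⟨i, Finset.mem_inter.2 ⟨hi, ht.2 (hYX hi)⟩⟩⟩⟩

lemma bond_anti {T : Finset τ} {items : τ → Finset ι} {X Y : Finset ι}
    (hYX : Y ⊆ X) (hY : Y.Nonempty) (hc : 0 < suppConj T items X) :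
    bond T items X ≤ bond T items Y := by
  have hdY := suppDisj_pos hYX hY hc
  rw [bond, bond]
  apply div_le_div₀ (by positivity)
    (by exact_mod_cast suppConj_anti T items hYX)
    (by exact_mod_cast hdY)
    (by exact_mod_cast suppDisj_mono T items hYX)

theorem stmt12 (T : Finset τ) (items : τ → Finset ι) (I : Finset ι)
    (hitems : ∀ t ∈ T, items t ⊆ I)
    (minsupp : ℕ) (minbond : ℚ)
    (hs1 : 1 ≤ minsupp) (hs2 : minsupp ≤ T.card)
    (hb0 : 0 < minbond) (hb1 : minbond ≤ 1)
    (X : Finset ι) (hXI : X ⊆ I) :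
    X ∈ MCR T items I minsupp minbond ↔
      ∃ J ∈ RMinMF T items I minsupp minbond, ∃ Z ∈ RMinMF T items I minsupp minbond,
        J ⊆ X ∧ X ⊆ Z := by
  constructor
  · intro hX
    obtain ⟨hXI', hXb, hXr⟩ := hX
    have hbX : 0 < bond T items X := lt_of_lt_of_le hb0 hXb
    have hcX := bond_pos_conj hbX
    -- construct J: a minimum-cardinality rare subset of X
    obtain ⟨J, hJmem, hJmin⟩ := Finset.exists_min_image
      (X.powerset.filter fun Y => suppConj T items Y < minsupp) Finset.card
      ⟨X, by simp [hXr]⟩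
    rw [Finset.mem_filter, Finset.mem_powerset] at hJmem
    have hJX : J ⊆ X := hJmem.1
    have hJr : suppConj T items J < minsupp := hJmem.2
    have hJne : J.Nonempty := by
      rcases J.eq_empty_or_nonempty with rfl | h
      · exfalso
        have : suppConj T items (∅ : Finset ι) = T.card := by simp [suppConj]
        omega
      · exact h
    have hJb : minbond ≤ bond T items J := hXb.trans (bond_anti hJX hJne hcX)
    have hJbpos : 0 < bond T items J := lt_of_lt_of_le hb0 hJb
    have hcJ := bond_pos_conj hJbpos
    have hdJ := bond_pos_disj hJbpos
    have hJrareMin : ∀ Y : Finset ι, Y ⊂ J → minsupp ≤ suppConj T items Y := by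
      intro Y hY
      by_contra h
      push_neg at h
      have hYmem : Y ∈ X.powerset.filter fun Y => suppConj T items Y < minsupp :=
        Finset.mem_filter.2 ⟨Finset.mem_powerset.2 (hY.subset.trans hJX), h⟩
      exact absurd (Finset.card_lt_card hY) (not_lt.2 (hJmin Y hYmem))
    have hJMCR : J ∈ MCR T items I minsupp minbond := ⟨hJX.trans hXI, hJb, hJr⟩
    have hJstrict : ∀ Y : Finset ι, Y ⊂ J → bond T items Y ≠ bond T items J := by
      intro Y hY
      rcases Y.eq_empty_or_nonempty with rfl | hYne
      · rw [bond_empty]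
        intro h
        rw [← h] at hJbpos
        exact lt_irrefl _ hJbpos
      · have h1 : suppConj T items J < suppConj T items Y :=
          lt_of_lt_of_le hJr (hJrareMin Y hY)
        have hdY : 0 < suppDisj T items Y := suppDisj_pos hY.subset hYne hcJ
        have hdle : suppDisj T items Y ≤ suppDisj T items J :=
          suppDisj_mono T items hY.subset
        have : bond T items J < bond T items Y := by
          rw [bond, bond]
          apply div_lt_div₀ (by exact_mod_cast h1) (by exact_mod_cast hdle)
            (by positivity) (by exact_mod_cast hdY)
        exact fun h => absurd h.symm (ne_of_lt this)
    have hJRMin : J ∈ RMinMF T items I minsupp minbond := by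
      right
      refine ⟨⟨hJMCR, hJstrict⟩, ⟨⟨hJX.trans hXI, hJr⟩, ?_⟩⟩
      intro Y hY hYmem
      have := hJrareMin Y hY
      exact absurd hYmem.2 (not_lt.2 this)
    -- construct Z: a maximum-cardinality superset of X within I with equal bond
    obtain ⟨Z, hZmem, hZmax⟩ := Finset.exists_max_image
      (I.powerset.filter fun Y => X ⊆ Y ∧ bond T items Y = bond T items X) Finset.card
      ⟨X, by simp [hXI]⟩
    rw [Finset.mem_filter, Finset.mem_powerset] at hZmem
    obtain ⟨hZI, hXZ, hZbond⟩ := hZmem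
    have hZMCR : Z ∈ MCR T items I minsupp minbond :=
      ⟨hZI, by rw [hZbond]; exact hXb, lt_of_le_of_lt (suppConj_anti T items hXZ) hXr⟩
    have hZRMin : Z ∈ RMinMF T items I minsupp minbond := by
      left
      refine ⟨hZMCR, ?_⟩
      intro Y hY hYI hbond
      have hYmem : Y ∈ I.powerset.filter
          fun Y => X ⊆ Y ∧ bond T items Y = bond T items X :=
        Finset.mem_filter.2 ⟨Finset.mem_powerset.2 hYI,
          hXZ.trans hY.subset, by rw [hbond, hZbond]⟩
      exact absurd (Finset.card_lt_card hY) (not_lt.2 (hZmax Y hYmem))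
    exact ⟨J, hJRMin, Z, hZRMin, hJX, hXZ⟩
  · rintro ⟨J, hJ, Z, hZ, hJX, hXZ⟩
    have hJMCR : J ∈ MCR T items I minsupp minbond := by
      rcases hJ with h | h
      · exact h.1
      · exact h.1.1
    have hZMCR : Z ∈ MCR T items I minsupp minbond := by
      rcases hZ with h | h
      · exact h.1
      · exact h.1.1
    have hbZ : 0 < bond T items Z := lt_of_lt_of_le hb0 hZMCR.2.1
    have hcZ := bond_pos_conj hbZ
    have hJne : J.Nonempty := by
      rcases J.eq_empty_or_nonempty with rfl | h
      · exfalso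
        have := hJMCR.2.1
        rw [bond_empty] at this
        exact absurd (lt_of_lt_of_le hb0 this) (lt_irrefl 0)
      · exact h
    have hXne : X.Nonempty := hJne.mono hJX
    exact ⟨hXI, hZMCR.2.1.trans (bond_anti hXZ hXne hcZ),
      lt_of_le_of_lt (suppConj_anti T items hJX) hJMCR.2.2⟩
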